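/- For all α, β > 0, set Γ_{(α,β)} := αℤ × βℤ ⊂ ℝ² and M_{α,β} := (Σ_{n∈ℤ} exp(−α²n²/(4ℓ²))) · (Σ_{n∈ℤ} exp(−β²n²/(4ℓ²))). Then for every φ ∈ ℋ₀: Σ_{γ∈Γ_{(α,β)}} |⟨χ_γ, φ⟩|² ≤ M_{α,β} · ‖φ‖². -/

import Mathlib

set_option maxHeartbeats 1000000


open MeasureTheory

/-- The normalized lowest-Landau-level wave function `ψ_m` (angular momentum `m`). -/
noncomputable def psiF (ℓ : ℝ) (m : ℕ) (x : EuclideanSpace ℝ (Fin 2)) : ℂ :=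
  ((1 / (ℓ * Real.sqrt (2 * Real.pi * m.factorial)) : ℝ) : ℂ) *
    (((x 0 : ℂ) - Complex.I * (x 1 : ℂ)) / ((ℓ : ℂ) * ((Real.sqrt 2 : ℝ) : ℂ))) ^ m *
    ((Real.exp (-‖x‖ ^ 2 / (4 * ℓ ^ 2)) : ℝ) : ℂ)

/-- The magnetic coherent state `χ_γ` centred at `γ`. -/
noncomputable def chiF (ℓ : ℝ) (γ x : EuclideanSpace ℝ (Fin 2)) : ℂ :=
  ((1 / (ℓ * Real.sqrt (2 * Real.pi)) : ℝ) : ℂ) *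
    Complex.exp (-Complex.I * ((γ 0 * x 1 - γ 1 * x 0 : ℝ) : ℂ) / (2 * (ℓ : ℂ) ^ 2)) *
    ((Real.exp (-‖x - γ‖ ^ 2 / (4 * ℓ ^ 2)) : ℝ) : ℂ)

/-- The point `(α m, β n)` of the lattice `αℤ × βℤ ⊂ ℝ²`. -/
noncomputable def latticePt (α β : ℝ) (p : ℤ × ℤ) : EuclideanSpace ℝ (Fin 2) :=
  (WithLp.equiv 2 (Fin 2 → ℝ)).symm ![α * (p.1 : ℝ), β * (p.2 : ℝ)]

/- ### Auxiliary lemmas -/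

section schur
variable {E : Type*} [NormedAddCommGroup E] [InnerProductSpace ℂ E] {ι : Type*}

lemma schur_finset (v : ι → E) (g : ι → ι → ℝ)
    (hg : ∀ i j, ‖(inner ℂ (v i) (v j) : ℂ)‖ ≤ g i j) (hsym : ∀ i j, g i j = g j i)
    (M : ℝ) (hM0 : 0 ≤ M) (hM : ∀ i (F : Finset ι), ∑ j ∈ F, g i j ≤ M) (φ : E)
    (F : Finset ι) :
    ∑ i ∈ F, ‖(inner ℂ (v i) φ : ℂ)‖ ^ 2 ≤ M * ‖φ‖ ^ 2 := by
  classical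
  set t : ι → ℂ := fun i => inner ℂ (v i) φ with ht
  set S : ℝ := ∑ i ∈ F, ‖t i‖ ^ 2 with hSdef
  have hS0 : 0 ≤ S := Finset.sum_nonneg fun i _ => sq_nonneg _
  set w : E := ∑ i ∈ F, t i • v i with hw
  have hinner : (inner ℂ w φ : ℂ) = (S : ℂ) := by
    rw [hw, sum_inner]
    have h : ∀ i ∈ F, (inner ℂ (t i • v i) φ : ℂ) = ((‖t i‖ ^ 2 : ℝ) : ℂ) := by
      intro i _
      rw [inner_smul_left]
      show (starRingEnd ℂ) (t i) * t i = _
      rw [RCLike.conj_mul]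
      norm_cast
    rw [Finset.sum_congr rfl h, hSdef]
    push_cast
    ring
  have hCS : S ≤ ‖w‖ * ‖φ‖ := by
    calc S = ‖(inner ℂ w φ : ℂ)‖ := by rw [hinner]; simp [abs_of_nonneg hS0]
    _ ≤ ‖w‖ * ‖φ‖ := norm_inner_le_norm w φ
  have hg0 : ∀ i j, 0 ≤ g i j := fun i j => le_trans (norm_nonneg _) (hg i j)
  have hww : ‖w‖ ^ 2 ≤ M * S := by
    have h1 : ‖w‖ ^ 2 ≤ ‖(inner ℂ w w : ℂ)‖ := by
      rw [← inner_self_eq_norm_sq (𝕜 := ℂ) w]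
      exact Complex.re_le_norm _
    have h2 : ‖(inner ℂ w w : ℂ)‖ ≤ ∑ i ∈ F, ∑ j ∈ F, ‖t i‖ * ‖t j‖ * g i j := by
      rw [hw, sum_inner]
      refine le_trans (norm_sum_le _ _) (Finset.sum_le_sum fun i _ => ?_)
      rw [inner_sum]
      refine le_trans (norm_sum_le _ _) (Finset.sum_le_sum fun j _ => ?_)
      rw [inner_smul_left, inner_smul_right, norm_mul, norm_mul, RCLike.norm_conj, mul_assoc]
      exact mul_le_mul_of_nonneg_left
        (mul_le_mul_of_nonneg_left (hg i j) (norm_nonneg _)) (norm_nonneg _)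
    have h3 : ∑ i ∈ F, ∑ j ∈ F, ‖t i‖ * ‖t j‖ * g i j ≤ M * S := by
      have hsplit : ∀ i ∈ F, ∀ j ∈ F, ‖t i‖ * ‖t j‖ * g i j ≤
          (‖t i‖ ^ 2 / 2) * g i j + (‖t j‖ ^ 2 / 2) * g i j := by
        intro i _ j _
        nlinarith [hg0 i j, sq_nonneg (‖t i‖ - ‖t j‖),
          mul_le_mul_of_nonneg_right
            (show ‖t i‖ * ‖t j‖ ≤ ‖t i‖ ^ 2 / 2 + ‖t j‖ ^ 2 / 2 by
              nlinarith [sq_nonneg (‖t i‖ - ‖t j‖)]) (hg0 i j)]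
      have hA : ∑ i ∈ F, ∑ j ∈ F, (‖t i‖ ^ 2 / 2) * g i j ≤ (S / 2) * M := by
        calc ∑ i ∈ F, ∑ j ∈ F, (‖t i‖ ^ 2 / 2) * g i j
            ≤ ∑ i ∈ F, (‖t i‖ ^ 2 / 2) * M := by
              refine Finset.sum_le_sum fun i _ => ?_
              rw [← Finset.mul_sum]
              exact mul_le_mul_of_nonneg_left (hM i F) (by positivity)
          _ = (S / 2) * M := by rw [← Finset.sum_mul, hSdef, Finset.sum_div]
      have hB : ∑ i ∈ F, ∑ j ∈ F, (‖t j‖ ^ 2 / 2) * g i j ≤ (S / 2) * M := by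
        rw [Finset.sum_comm]
        calc ∑ j ∈ F, ∑ i ∈ F, (‖t j‖ ^ 2 / 2) * g i j
            ≤ ∑ j ∈ F, (‖t j‖ ^ 2 / 2) * M := by
              refine Finset.sum_le_sum fun j _ => ?_
              rw [← Finset.mul_sum]
              refine mul_le_mul_of_nonneg_left ?_ (by positivity)
              rw [Finset.sum_congr rfl (fun i _ => hsym i j)]
              exact hM j F
          _ = (S / 2) * M := by rw [← Finset.sum_mul, hSdef, Finset.sum_div]
      calc ∑ i ∈ F, ∑ j ∈ F, ‖t i‖ * ‖t j‖ * g i j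
          ≤ ∑ i ∈ F, ∑ j ∈ F, ((‖t i‖ ^ 2 / 2) * g i j + (‖t j‖ ^ 2 / 2) * g i j) :=
            Finset.sum_le_sum fun i hi => Finset.sum_le_sum fun j hj => hsplit i hi j hj
        _ = ∑ i ∈ F, ∑ j ∈ F, (‖t i‖ ^ 2 / 2) * g i j
            + ∑ i ∈ F, ∑ j ∈ F, (‖t j‖ ^ 2 / 2) * g i j := by
            simp_rw [Finset.sum_add_distrib]
        _ ≤ (S / 2) * M + (S / 2) * M := add_le_add hA hB
        _ = M * S := by ring
    exact le_trans h1 (le_trans h2 h3)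
  by_cases hS : S = 0
  · rw [hS]; positivity
  · have hSpos : 0 < S := lt_of_le_of_ne hS0 (Ne.symm hS)
    nlinarith [mul_le_mul hCS hCS hS0 (by positivity : (0:ℝ) ≤ ‖w‖ * ‖φ‖),
      mul_le_mul_of_nonneg_right hww (sq_nonneg ‖φ‖)]

lemma schur_bessel (v : ι → E) (g : ι → ι → ℝ)
    (hg : ∀ i j, ‖(inner ℂ (v i) (v j) : ℂ)‖ ≤ g i j) (hsym : ∀ i j, g i j = g j i)
    (M : ℝ) (hM0 : 0 ≤ M) (hM : ∀ i (F : Finset ι), ∑ j ∈ F, g i j ≤ M) (φ : E) :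
    ∃ s : ℝ, HasSum (fun i => ‖(inner ℂ (v i) φ : ℂ)‖ ^ 2) s ∧ s ≤ M * ‖φ‖ ^ 2 := by
  have key := schur_finset v g hg hsym M hM0 hM φ
  have hsum : Summable fun i => ‖(inner ℂ (v i) φ : ℂ)‖ ^ 2 :=
    summable_of_sum_le (fun i => sq_nonneg _) key
  exact ⟨_, hsum.hasSum, Summable.tsum_le_of_sum_le hsum key⟩
end schur

lemma norm_sq_euclid (y : EuclideanSpace ℝ (Fin 2)) : ‖y‖ ^ 2 = (y 0) ^ 2 + (y 1) ^ 2 := by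
  rw [EuclideanSpace.norm_eq, Real.sq_sqrt (by positivity)]
  simp [Fin.sum_univ_two, sq_abs]

lemma gauss1 (ℓ : ℝ) (hℓ : 0 < ℓ) (p q dd : ℝ) :
    ‖∫ u : ℝ, Complex.exp ((((-(1/(2*ℓ^2)) : ℝ)) : ℂ) * (u:ℂ)^2
        + ((p:ℂ) + Complex.I*(q:ℂ)) * (u:ℂ) + ((dd:ℝ):ℂ))‖
      = Real.sqrt (2*Real.pi*ℓ^2) * Real.exp (dd + (p^2 - q^2) * ℓ^2 / 2) := by
  have hbre : ((((-(1/(2*ℓ^2)) : ℝ)) : ℂ)).re < 0 := by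
    rw [Complex.ofReal_re]
    have : (0:ℝ) < 1/(2*ℓ^2) := by positivity
    linarith
  rw [integral_cexp_quadratic hbre, norm_mul]
  have h1 : ((Real.pi : ℂ) / -((((-(1/(2*ℓ^2)) : ℝ)) : ℂ))) = ((2*Real.pi*ℓ^2 : ℝ) : ℂ) := by
    rw [← Complex.ofReal_neg, ← Complex.ofReal_div]
    congr 1
    field_simp
  have hℓ' : ℓ ≠ 0 := hℓ.ne'
  rw [h1, Complex.norm_cpow_eq_rpow_re_of_pos (by positivity), Complex.norm_exp]
  congr 1
  · have : ((1:ℂ)/2).re = (1:ℝ)/2 := by norm_num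
    rw [this, Real.sqrt_eq_rpow]
  · have h4 : 4 * ((((-(1/(2*ℓ^2)) : ℝ)) : ℂ)) = ((-2/ℓ^2 : ℝ) : ℂ) := by
      push_cast
      field_simp
      ring
    have hc2 : (((p:ℂ) + Complex.I*(q:ℂ)))^2
        = (((p^2 - q^2 : ℝ)) : ℂ) + Complex.I * ((2*p*q : ℝ) : ℂ) := by
      have : Complex.I^2 = -1 := Complex.I_sq
      push_cast
      ring_nf
      rw [Complex.I_sq]
      ring
    rw [h4, hc2, Complex.sub_re, Complex.div_ofReal_re, Complex.ofReal_re, Complex.add_re,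
      Complex.ofReal_re, Complex.mul_re, Complex.I_re, Complex.I_im, Complex.ofReal_re,
      Complex.ofReal_im]
    field_simp
    ring

lemma chi_gram (ℓ : ℝ) (hℓ : 0 < ℓ) (γ γ' : EuclideanSpace ℝ (Fin 2))
    (f g : Lp ℂ 2 (volume : Measure (EuclideanSpace ℝ (Fin 2))))
    (hf : ⇑f =ᵐ[volume] chiF ℓ γ) (hg : ⇑g =ᵐ[volume] chiF ℓ γ') :
    ‖(inner ℂ f g : ℂ)‖ ≤ Real.exp (-‖γ - γ'‖ ^ 2 / (4 * ℓ ^ 2)) := by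
  have hℓ' : ℓ ≠ 0 := hℓ.ne'
  have hℓC : (ℓ : ℂ) ≠ 0 := Complex.ofReal_ne_zero.mpr hℓ.ne'
  set p₁ : ℝ := (γ 0 + γ' 0)/(2*ℓ^2) with hp₁
  set q₁ : ℝ := (γ' 1 - γ 1)/(2*ℓ^2) with hq₁
  set d₁ : ℝ := -((γ 0)^2 + (γ' 0)^2)/(4*ℓ^2) with hd₁
  set p₂ : ℝ := (γ 1 + γ' 1)/(2*ℓ^2) with hp₂
  set q₂ : ℝ := (γ 0 - γ' 0)/(2*ℓ^2) with hq₂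
  set d₂ : ℝ := -((γ 1)^2 + (γ' 1)^2)/(4*ℓ^2) with hd₂
  set E1c : ℝ → ℂ := fun u => Complex.exp ((((-(1/(2*ℓ^2)) : ℝ)) : ℂ) * (u:ℂ)^2
      + ((p₁:ℂ) + Complex.I*(q₁:ℂ)) * (u:ℂ) + ((d₁:ℝ):ℂ)) with hE1c
  set E2c : ℝ → ℂ := fun u => Complex.exp ((((-(1/(2*ℓ^2)) : ℝ)) : ℂ) * (u:ℂ)^2
      + ((p₂:ℂ) + Complex.I*(q₂:ℂ)) * (u:ℂ) + ((d₂:ℝ):ℂ)) with hE2c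
  have key : ∀ x : EuclideanSpace ℝ (Fin 2),
      (starRingEnd ℂ) (chiF ℓ γ x) * chiF ℓ γ' x
        = ((1/(2*Real.pi*ℓ^2) : ℝ) : ℂ) * (E1c (x 0) * E2c (x 1)) := by
    intro x
    have hx1 : ‖x - γ‖^2 = (x 0 - γ 0)^2 + (x 1 - γ 1)^2 := by
      rw [norm_sq_euclid]; simp
    have hx2 : ‖x - γ'‖^2 = (x 0 - γ' 0)^2 + (x 1 - γ' 1)^2 := by
      rw [norm_sq_euclid]; simp
    have hK : ((1/(ℓ*Real.sqrt (2*Real.pi)) : ℝ) : ℂ) * ((1/(ℓ*Real.sqrt (2*Real.pi)) : ℝ) : ℂ)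
        = ((1/(2*Real.pi*ℓ^2) : ℝ) : ℂ) := by
      rw [← Complex.ofReal_mul]
      congr 1
      rw [div_mul_div_comm, one_mul, mul_mul_mul_comm, Real.mul_self_sqrt (by positivity)]
      ring
    have haux : ∀ (k z₁ z₂ z₃ z₄ : ℂ),
        (k * Complex.exp z₁ * Complex.exp z₂) * (k * Complex.exp z₃ * Complex.exp z₄)
          = (k*k) * Complex.exp (z₁+z₂+(z₃+z₄)) := by
      intro k z₁ z₂ z₃ z₄
      rw [Complex.exp_add, Complex.exp_add, Complex.exp_add]
      ring
    simp only [chiF, hx1, hx2, map_mul, Complex.ofReal_exp, ← Complex.exp_conj, map_div₀,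
      map_neg, Complex.conj_I, Complex.conj_ofReal, map_pow, map_ofNat]
    rw [haux, hK]
    simp only [hE1c, hE2c]
    rw [← Complex.exp_add]
    congr 2
    rw [hp₁, hq₁, hd₁, hp₂, hq₂, hd₂]
    push_cast
    field_simp [hℓC]
    push_cast
    ring
  have hint : (inner ℂ f g : ℂ)
      = ((1/(2*Real.pi*ℓ^2) : ℝ) : ℂ) * ((∫ u : ℝ, E1c u) * (∫ u : ℝ, E2c u)) := by
    rw [MeasureTheory.L2.inner_def]
    rw [integral_congr_ae (g := fun x : EuclideanSpace ℝ (Fin 2) =>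
        ((1/(2*Real.pi*ℓ^2) : ℝ) : ℂ) * (E1c (x 0) * E2c (x 1)))
      (by filter_upwards [hf, hg] with x h1 h2
          rw [h1, h2, RCLike.inner_apply', key x])]
    calc ∫ x : EuclideanSpace ℝ (Fin 2), ((1/(2*Real.pi*ℓ^2) : ℝ) : ℂ) * (E1c (x 0) * E2c (x 1))
        = ∫ y : Fin 2 → ℝ, ((1/(2*Real.pi*ℓ^2) : ℝ) : ℂ) * (E1c (y 0) * E2c (y 1)) :=
          (EuclideanSpace.volume_preserving_symm_measurableEquiv_toLp (Fin 2)).integral_comp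
            (MeasurableEquiv.measurableEmbedding _)
            (fun y : Fin 2 → ℝ => ((1/(2*Real.pi*ℓ^2) : ℝ) : ℂ) * (E1c (y 0) * E2c (y 1)))
      _ = ∫ z : ℝ × ℝ, ((1/(2*Real.pi*ℓ^2) : ℝ) : ℂ) * (E1c z.1 * E2c z.2) :=
          (MeasureTheory.volume_preserving_finTwoArrow ℝ).integral_comp
            (MeasurableEquiv.measurableEmbedding _)
            (fun z : ℝ × ℝ => ((1/(2*Real.pi*ℓ^2) : ℝ) : ℂ) * (E1c z.1 * E2c z.2))
      _ = ∫ z : ℝ × ℝ, (((1/(2*Real.pi*ℓ^2) : ℝ) : ℂ) * E1c z.1) * E2c z.2 := by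
          simp [mul_assoc]
      _ = (∫ u : ℝ, ((1/(2*Real.pi*ℓ^2) : ℝ) : ℂ) * E1c u) * ∫ u : ℝ, E2c u := by
          rw [MeasureTheory.Measure.volume_eq_prod]
          exact MeasureTheory.integral_prod_mul
            (fun u : ℝ => ((1/(2*Real.pi*ℓ^2) : ℝ) : ℂ) * E1c u) (fun u : ℝ => E2c u)
      _ = ((1/(2*Real.pi*ℓ^2) : ℝ) : ℂ) * ((∫ u : ℝ, E1c u) * (∫ u : ℝ, E2c u)) := by
          rw [MeasureTheory.integral_const_mul]
          ring
  rw [hint, norm_mul, norm_mul, hE1c, hE2c, gauss1 ℓ hℓ p₁ q₁ d₁, gauss1 ℓ hℓ p₂ q₂ d₂]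
  have hCnorm : ‖((1/(2*Real.pi*ℓ^2) : ℝ) : ℂ)‖ = 1/(2*Real.pi*ℓ^2) := by
    rw [Complex.norm_real, Real.norm_eq_abs, abs_of_pos (by positivity)]
  rw [hCnorm]
  have hsub : ‖γ - γ'‖^2 = (γ 0 - γ' 0)^2 + (γ 1 - γ' 1)^2 := by
    rw [norm_sq_euclid]; simp
  have hexp : (d₁ + (p₁^2 - q₁^2) * ℓ^2 / 2) + (d₂ + (p₂^2 - q₂^2) * ℓ^2 / 2)
      = -‖γ - γ'‖^2 / (4*ℓ^2) := by
    rw [hsub, hp₁, hq₁, hd₁, hp₂, hq₂, hd₂]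
    field_simp
    ring
  have hN : Real.sqrt (2*Real.pi*ℓ^2) * Real.sqrt (2*Real.pi*ℓ^2) = 2*Real.pi*ℓ^2 :=
    Real.mul_self_sqrt (by positivity)
  apply le_of_eq
  calc 1/(2*Real.pi*ℓ^2) * ((Real.sqrt (2*Real.pi*ℓ^2) * Real.exp (d₁ + (p₁^2 - q₁^2) * ℓ^2 / 2))
        * (Real.sqrt (2*Real.pi*ℓ^2) * Real.exp (d₂ + (p₂^2 - q₂^2) * ℓ^2 / 2)))
      = (1/(2*Real.pi*ℓ^2) * (Real.sqrt (2*Real.pi*ℓ^2) * Real.sqrt (2*Real.pi*ℓ^2)))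
        * (Real.exp (d₁ + (p₁^2 - q₁^2) * ℓ^2 / 2) * Real.exp (d₂ + (p₂^2 - q₂^2) * ℓ^2 / 2)) := by
        ring
    _ = Real.exp (-‖γ - γ'‖^2 / (4*ℓ^2)) := by
        rw [hN, ← Real.exp_add, hexp]
        have h1N : 1/(2*Real.pi*ℓ^2) * (2*Real.pi*ℓ^2) = 1 := by
          field_simp
        rw [h1N, one_mul]

lemma summable_gauss_nat {c : ℝ} (hc : 0 < c) :
    Summable (fun n : ℕ => Real.exp (-c * (n:ℝ)^2)) := by
  refine Summable.of_nonneg_of_le (fun n => (Real.exp_pos _).le) (fun n => ?_)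
    (summable_geometric_of_lt_one (Real.exp_pos (-c)).le
      (Real.exp_lt_one_iff.mpr (by linarith)))
  have hxp : Real.exp (-c) ^ n = Real.exp ((n:ℝ) * (-c)) := by
    rw [← Real.exp_nat_mul]
  rw [hxp]
  apply Real.exp_le_exp.mpr
  have hn : (n:ℝ) ≤ (n:ℝ)^2 := by
    rcases Nat.eq_zero_or_pos n with h | h
    · simp [h]
    · have h1 : (1:ℝ) ≤ (n:ℝ) := by exact_mod_cast h
      nlinarith
  nlinarith

lemma summable_gauss_int {c : ℝ} (hc : 0 < c) :
    Summable (fun n : ℤ => Real.exp (-c * (n:ℝ)^2)) := by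
  apply Summable.of_nat_of_neg
  · exact_mod_cast summable_gauss_nat hc
  · refine (summable_gauss_nat hc).congr fun n => ?_
    push_cast
    ring_nf

lemma latticePt_sub (α β : ℝ) (p q : ℤ × ℤ) :
    latticePt α β p - latticePt α β q = latticePt α β (p - q) := by
  ext i
  fin_cases i <;> simp [latticePt] <;> push_cast <;> ring

lemma latticePt_norm_sq (α β : ℝ) (r : ℤ × ℤ) :
    ‖latticePt α β r‖ ^ 2 = α^2 * ((r.1:ℝ))^2 + β^2 * ((r.2:ℝ))^2 := by
  rw [norm_sq_euclid]
  simp [latticePt]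
  ring

/-- Bessel bound for the magnetic Gabor family on the lattice
`Γ_{(α,β)} = αℤ × βℤ`:  for every `φ` in the lowest Landau level `ℋ₀`,
`Σ_{γ∈Γ_{(α,β)}} |⟨χ_γ, φ⟩|² ≤ M_{α,β} ‖φ‖²`, where
`M_{α,β} = (Σ_{n∈ℤ} e^{-α²n²/(4ℓ²)}) (Σ_{n∈ℤ} e^{-β²n²/(4ℓ²)})`. -/
theorem stmt_13 (ℓ α β : ℝ) (hℓ : 0 < ℓ) (hα : 0 < α) (hβ : 0 < β)
    (Ψ : ℕ → Lp ℂ 2 (volume : Measure (EuclideanSpace ℝ (Fin 2))))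
    (hΨ : ∀ m : ℕ, ⇑(Ψ m) =ᵐ[volume] psiF ℓ m)
    (X : EuclideanSpace ℝ (Fin 2) → Lp ℂ 2 (volume : Measure (EuclideanSpace ℝ (Fin 2))))
    (hX : ∀ γ : EuclideanSpace ℝ (Fin 2), ⇑(X γ) =ᵐ[volume] chiF ℓ γ)
    (φ : Lp ℂ 2 (volume : Measure (EuclideanSpace ℝ (Fin 2))))
    (hφ : φ ∈ (Submodule.span ℂ (Set.range Ψ)).topologicalClosure) :
    ∃ s : ℝ,
      HasSum (fun p : ℤ × ℤ => ‖(inner ℂ (X (latticePt α β p)) φ : ℂ)‖ ^ 2) s ∧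
      s ≤ (∑' n : ℤ, Real.exp (-α ^ 2 * (n : ℝ) ^ 2 / (4 * ℓ ^ 2))) *
            (∑' n : ℤ, Real.exp (-β ^ 2 * (n : ℝ) ^ 2 / (4 * ℓ ^ 2))) * ‖φ‖ ^ 2 := by
  classical
  set e₁ : ℤ → ℝ := fun n => Real.exp (-α ^ 2 * (n : ℝ) ^ 2 / (4 * ℓ ^ 2)) with he₁
  set e₂ : ℤ → ℝ := fun n => Real.exp (-β ^ 2 * (n : ℝ) ^ 2 / (4 * ℓ ^ 2)) with he₂
  have hsum1 : Summable e₁ := by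
    refine (summable_gauss_int (c := α^2/(4*ℓ^2)) (by positivity)).congr fun n => ?_
    rw [he₁]
    congr 1
    field_simp
  have hsum2 : Summable e₂ := by
    refine (summable_gauss_int (c := β^2/(4*ℓ^2)) (by positivity)).congr fun n => ?_
    rw [he₂]
    congr 1
    field_simp
  have hprod : Summable (fun r : ℤ × ℤ => e₁ r.1 * e₂ r.2) :=
    hsum1.mul_of_nonneg hsum2 (fun n => (Real.exp_pos _).le) (fun n => (Real.exp_pos _).le)
  set M : ℝ := (∑' n : ℤ, e₁ n) * (∑' n : ℤ, e₂ n) with hM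
  have htsum_prod : (∑' r : ℤ × ℤ, e₁ r.1 * e₂ r.2) = M :=
    (Summable.tsum_mul_tsum hsum1 hsum2 hprod).symm
  set g : (ℤ × ℤ) → (ℤ × ℤ) → ℝ := fun p q =>
    Real.exp (-‖latticePt α β p - latticePt α β q‖ ^ 2 / (4 * ℓ ^ 2)) with hgdef
  have hg : ∀ p q : ℤ × ℤ,
      ‖(inner ℂ (X (latticePt α β p)) (X (latticePt α β q)) : ℂ)‖ ≤ g p q :=
    fun p q => chi_gram ℓ hℓ _ _ _ _ (hX _) (hX _)
  have hsym : ∀ p q : ℤ × ℤ, g p q = g q p := by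
    intro p q
    rw [hgdef]
    simp only
    rw [norm_sub_rev]
  have hM0 : 0 ≤ M := by
    rw [hM]
    exact mul_nonneg (tsum_nonneg fun n => (Real.exp_pos _).le)
      (tsum_nonneg fun n => (Real.exp_pos _).le)
  have hgeq : ∀ p q : ℤ × ℤ, g p q = e₁ ((p - q).1) * e₂ ((p - q).2) := by
    intro p q
    rw [hgdef]
    simp only
    rw [latticePt_sub, latticePt_norm_sq, he₁, he₂]
    simp only
    rw [← Real.exp_add]
    congr 1
    ring
  have hMbound : ∀ (p : ℤ × ℤ) (F : Finset (ℤ × ℤ)), ∑ q ∈ F, g p q ≤ M := by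
    intro p F
    have hshift : Summable (fun q : ℤ × ℤ => e₁ ((p - q).1) * e₂ ((p - q).2)) :=
      (Equiv.subLeft p).summable_iff.mpr hprod
    calc ∑ q ∈ F, g p q = ∑ q ∈ F, e₁ ((p - q).1) * e₂ ((p - q).2) :=
          Finset.sum_congr rfl fun q _ => hgeq p q
      _ ≤ ∑' q : ℤ × ℤ, e₁ ((p - q).1) * e₂ ((p - q).2) :=
          Summable.sum_le_tsum F (fun q _ => mul_nonneg (Real.exp_pos _).le (Real.exp_pos _).le) hshift
      _ = ∑' r : ℤ × ℤ, e₁ r.1 * e₂ r.2 :=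
          (Equiv.subLeft p).tsum_eq (fun r : ℤ × ℤ => e₁ r.1 * e₂ r.2)
      _ = M := htsum_prod
  obtain ⟨s, hs, hle⟩ := schur_bessel (fun p : ℤ × ℤ => X (latticePt α β p)) g hg hsym
    M hM0 hMbound φ
  exact ⟨s, hs, hle⟩
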